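/- Let e_0 > 0 and 0 < δ < 1, and let G be a graph such that for every vertex subset U with e_G(U) > e_0, the induced subgraph G[U] is not a δ-expander (i.e., h_{G[U]} < δ). Then there exists a partition 𝒜 of V(G) such that (a) every part A satisfies e_G(A) ≤ max{e(G)/2, e_0}, and (b) the number of edges between distinct parts of 𝒜 is at most (δ/(1+δ))·((3+δ)/2)·e(G). -/
import Mathlib


open Finset
open scoped Classical

noncomputable section

variable {V : Type*} [Fintype V]

/-- Number of edges between `A` and `B` (each cross edge counted once when `A`,`B` disjoint). -/
def ecut (G : SimpleGraph V) (A B : Finset V) : ℝ :=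
  ((A ×ˢ B).filter fun p => G.Adj p.1 p.2).card

/-- Number of edges inside `A`. -/
def ein (G : SimpleGraph V) (A : Finset V) : ℝ := ecut G A A / 2

/-- Volume of a vertex set: sum of degrees. -/
def gvol (G : SimpleGraph V) (A : Finset V) : ℝ := ∑ v ∈ A, (G.degree v : ℝ)

/-- Number of edges of `G`. -/
def edgecount (G : SimpleGraph V) : ℝ := (G.edgeFinset.card : ℝ)

/-- Conductance (Cheeger constant) `h_G`. -/
def conduct (G : SimpleGraph V) : ℝ :=
  sInf { x | ∃ A : Finset V, A.Nonempty ∧ A ≠ univ ∧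
    x = ecut G A Aᶜ / min (gvol G A) (gvol G Aᶜ) }

/-- Expansion-by-products `ĥ_G`. -/
def hhat (G : SimpleGraph V) : ℝ :=
  sInf { x | ∃ A : Finset V, A.Nonempty ∧ A ≠ univ ∧
    x = ecut G A Aᶜ * gvol G univ / (gvol G A * gvol G Aᶜ) }

/-- Modularity score of a vertex partition. -/
def modScore (G : SimpleGraph V) (P : Finpartition (univ : Finset V)) : ℝ :=
  (∑ A ∈ P.parts, ein G A) / edgecount G
    - (∑ A ∈ P.parts, (gvol G A) ^ 2) / (4 * (edgecount G) ^ 2)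

/-- Modularity `q*(G)`: maximum modularity score over vertex partitions. -/
def modularity (G : SimpleGraph V) : ℝ :=
  sSup { x | ∃ P : Finpartition (univ : Finset V), x = modScore G P }

set_option linter.unusedSectionVars false

/-! ### Auxiliary lemmas -/

lemma ecut_eq_sum (G : SimpleGraph V) (A B : Finset V) :
    ecut G A B = ∑ a ∈ A, ∑ b ∈ B, if G.Adj a b then (1:ℝ) else 0 := by
  unfold ecut
  rw [Finset.card_filter]
  push_cast
  rw [Finset.sum_product]

lemma ecut_nonneg (G : SimpleGraph V) (A B : Finset V) : 0 ≤ ecut G A B := by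
  unfold ecut; positivity

lemma ecut_comm (G : SimpleGraph V) (A B : Finset V) : ecut G A B = ecut G B A := by
  rw [ecut_eq_sum, ecut_eq_sum, Finset.sum_comm]
  refine Finset.sum_congr rfl fun b _ => Finset.sum_congr rfl fun a _ => ?_
  simp [G.adj_comm]

lemma ecut_union_left (G : SimpleGraph V) {S T : Finset V} (B : Finset V) (h : Disjoint S T) :
    ecut G (S ∪ T) B = ecut G S B + ecut G T B := by
  rw [ecut_eq_sum, ecut_eq_sum, ecut_eq_sum, Finset.sum_union h]

lemma ecut_union_right (G : SimpleGraph V) (A : Finset V) {S T : Finset V} (h : Disjoint S T) :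
    ecut G A (S ∪ T) = ecut G A S + ecut G A T := by
  rw [ecut_comm, ecut_union_left G A h, ecut_comm G S A, ecut_comm G T A]

lemma ein_union (G : SimpleGraph V) {S T : Finset V} (h : Disjoint S T) :
    ein G (S ∪ T) = ein G S + ein G T + ecut G S T := by
  unfold ein
  rw [ecut_union_left G _ h, ecut_union_right G _ h, ecut_union_right G _ h,
    ecut_comm G T S]
  ring

lemma ein_nonneg (G : SimpleGraph V) (A : Finset V) : 0 ≤ ein G A := by
  unfold ein; have := ecut_nonneg G A A; linarith

lemma ecut_mono (G : SimpleGraph V) {A B A' B' : Finset V} (hA : A ⊆ A') (hB : B ⊆ B') :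
    ecut G A B ≤ ecut G A' B' := by
  rw [ecut_eq_sum, ecut_eq_sum]
  calc (∑ a ∈ A, ∑ b ∈ B, if G.Adj a b then (1:ℝ) else 0)
      ≤ ∑ a ∈ A, ∑ b ∈ B', if G.Adj a b then (1:ℝ) else 0 := by
        refine Finset.sum_le_sum fun a _ => ?_
        refine Finset.sum_le_sum_of_subset_of_nonneg hB fun b _ _ => by positivity
    _ ≤ ∑ a ∈ A', ∑ b ∈ B', if G.Adj a b then (1:ℝ) else 0 := by
        refine Finset.sum_le_sum_of_subset_of_nonneg hA fun a _ _ => by positivity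

lemma ein_mono (G : SimpleGraph V) {A B : Finset V} (h : A ⊆ B) : ein G A ≤ ein G B := by
  unfold ein
  have := ecut_mono G h h
  linarith

lemma gvol_eq (G : SimpleGraph V) (A : Finset V) : gvol G A = ecut G A univ := by
  rw [ecut_eq_sum]
  refine Finset.sum_congr rfl fun v _ => ?_
  have h : G.degree v = (univ.filter (G.Adj v)).card := by
    rw [← SimpleGraph.neighborFinset_eq_filter]; rfl
  rw [h, Finset.card_filter]
  push_cast
  rfl

lemma edgecount_eq (G : SimpleGraph V) : edgecount G = ein G univ := by
  have h := SimpleGraph.sum_degrees_eq_twice_card_edges G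
  have h2 : gvol G univ = 2 * edgecount G := by
    unfold gvol edgecount
    rw [show ((2:ℝ) * (G.edgeFinset.card : ℝ)) = ((2 * G.edgeFinset.card : ℕ) : ℝ) by
      push_cast; ring, ← h]
    push_cast
    rfl
  have h3 : gvol G univ = 2 * ein G univ := by
    rw [gvol_eq]; unfold ein; ring
  linarith

lemma ecut_image (G : SimpleGraph V) (U : Finset V)
    (A B : Finset ((U : Set V) : Set V)) :
    ecut (G.induce (U : Set V)) A B
      = ecut G (A.image Subtype.val) (B.image Subtype.val) := by
  rw [ecut_eq_sum, ecut_eq_sum,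
    Finset.sum_image (fun a _ b _ h => Subtype.val_injective h)]
  refine Finset.sum_congr rfl fun a _ => ?_
  rw [Finset.sum_image (fun a _ b _ h => Subtype.val_injective h)]
  refine Finset.sum_congr rfl fun b _ => ?_
  rfl

lemma image_val_univ (U : Finset V) :
    (univ : Finset ((U : Set V) : Set V)).image Subtype.val = U := by
  ext x
  simp

/-- The potential function controlling accumulated boundary edges. -/
def phiB (δ M m : ℝ) : ℝ := if m ≤ M then 0 else 2 * δ / (1 + δ) * (m - M) + δ * M

lemma phiB_nonneg {δ M m : ℝ} (hδ0 : 0 < δ) (hδ1 : δ < 1) (hM : 0 < M) : 0 ≤ phiB δ M m := by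
  unfold phiB
  split_ifs with h
  · exact le_refl 0
  · push_neg at h
    have h1 : (0:ℝ) < 1 + δ := by linarith
    have h2 : 0 ≤ 2 * δ / (1 + δ) * (m - M) := by
      apply mul_nonneg (by positivity)
      linarith
    nlinarith

/-- The key numerical step, assuming `a ≤ b`. -/
lemma phi_step_core (δ M a b c : ℝ) (hδ0 : 0 < δ) (hδ1 : δ < 1) (hM : 0 < M)
    (ha : 0 ≤ a) (hc : 0 ≤ c) (hab : a ≤ b)
    (habc : a + b + c ≤ 2 * M) (hMm : M < a + b + c)
    (hcut : c ≤ δ * (2 * a + c)) :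
    c + phiB δ M a + phiB δ M b ≤ phiB δ M (a + b + c) := by
  have h1 : (0:ℝ) < 1 + δ := by linarith
  have haM : a ≤ M := by linarith
  obtain ⟨u, hu0, hu⟩ : ∃ u : ℝ, 0 ≤ u ∧ u * (1 + δ) = 1 :=
    ⟨1 / (1 + δ), by positivity, by field_simp⟩
  have hu1 : u = 1 / (1 + δ) := eq_one_div_of_mul_eq_one_left hu
  have hd1 : 2 * δ / (1 + δ) = 2 * δ * u := by rw [hu1]; ring
  rw [phiB, if_pos haM]
  by_cases hbM : b ≤ M
  · rw [phiB, if_pos hbM, phiB, if_neg (not_le.mpr hMm), hd1]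
    have hcm : c ≤ δ * (a + b + c) := by nlinarith
    have key : δ * (a + b + c) * (1 + δ) ≤ 2 * δ * (a + b + c - M) + δ * M * (1 + δ) := by
      nlinarith [mul_nonneg (mul_nonneg hδ0.le (by linarith : (0:ℝ) ≤ 1 - δ))
        (by linarith : (0:ℝ) ≤ a + b + c - M)]
    have h2 := mul_le_mul_of_nonneg_left key hu0
    have h3 : u * (δ * (a + b + c) * (1 + δ)) = δ * (a + b + c) := by
      rw [hu1]; field_simp
    have h4 : u * (δ * M * (1 + δ)) = δ * M := by rw [hu1]; field_simp
    nlinarith [h2, h3, h4, hcm]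
  · push_neg at hbM
    rw [phiB, if_neg (not_le.mpr hbM), phiB, if_neg (not_le.mpr hMm), hd1]
    have key : c * (1 + δ) ≤ 2 * δ * (a + c) := by nlinarith
    have h2 := mul_le_mul_of_nonneg_left key hu0
    have h3 : u * (c * (1 + δ)) = c := by rw [hu1]; field_simp
    nlinarith [h2, h3]

lemma phi_step (δ M a b c : ℝ) (hδ0 : 0 < δ) (hδ1 : δ < 1) (hM : 0 < M)
    (ha : 0 ≤ a) (hb : 0 ≤ b) (hc : 0 ≤ c)
    (habc : a + b + c ≤ 2 * M) (hMm : M < a + b + c)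
    (hcut : c ≤ δ * min (2 * a + c) (2 * b + c)) :
    c + phiB δ M a + phiB δ M b ≤ phiB δ M (a + b + c) := by
  rcases le_total a b with hab | hab
  · have hmin : min (2 * a + c) (2 * b + c) = 2 * a + c := min_eq_left (by linarith)
    rw [hmin] at hcut
    exact phi_step_core δ M a b c hδ0 hδ1 hM ha hc hab habc hMm hcut
  · have hmin : min (2 * a + c) (2 * b + c) = 2 * b + c := min_eq_right (by linarith)
    rw [hmin] at hcut
    have := phi_step_core δ M b a c hδ0 hδ1 hM hb hc hab (by linarith) (by linarith) hcut
    rw [show b + a + c = a + b + c by ring] at this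
    linarith

lemma phi_final (δ M e : ℝ) (hδ0 : 0 < δ) (hδ1 : δ < 1) (hM : 0 < M)
    (he : 0 ≤ e) (hMe : e / 2 ≤ M) :
    phiB δ M e ≤ δ / (1 + δ) * ((3 + δ) / 2) * e := by
  have h1 : (0:ℝ) < 1 + δ := by linarith
  unfold phiB
  split_ifs with h
  · positivity
  · push_neg at h
    obtain ⟨u, hu0, hu⟩ : ∃ u : ℝ, 0 ≤ u ∧ u * (1 + δ) = 1 :=
      ⟨1 / (1 + δ), by positivity, by field_simp⟩
    have hu1 : u = 1 / (1 + δ) := eq_one_div_of_mul_eq_one_left hu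
    rw [show (2 * δ / (1 + δ)) = 2 * δ * u by rw [hu1]; ring,
      show (δ / (1 + δ) * ((3 + δ) / 2) * e) = δ * ((3 + δ) / 2) * e * u by rw [hu1]; ring]
    have key : 2 * δ * (e - M) + δ * M * (1 + δ) ≤ δ * ((3 + δ) / 2) * e := by
      nlinarith [mul_nonneg (mul_nonneg hδ0.le (by linarith : (0:ℝ) ≤ 1 - δ))
        (by linarith : (0:ℝ) ≤ M - e / 2)]
    have h2 := mul_le_mul_of_nonneg_left key hu0
    have h3 : u * (δ * M * (1 + δ)) = δ * M := by rw [hu1]; field_simp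
    nlinarith [h2, h3]

lemma ecut_split_compl (G : SimpleGraph V) (B A : Finset V) :
    ecut G B univ = ecut G B A + ecut G B Aᶜ := by
  rw [show (univ : Finset V) = A ∪ Aᶜ from (Finset.union_compl A).symm,
    ecut_union_right G B disjoint_compl_right]

/-- Extract a sparse cut from a conductance bound (generic vertex type). -/
lemma conduct_witness {W : Type*} [Fintype W] (H : SimpleGraph W) {δ : ℝ}
    (hδ0 : 0 < δ) (hc : conduct H < δ) (u v : W) (huv : u ≠ v) :
    ∃ A B : Finset W, A.Nonempty ∧ B.Nonempty ∧ Disjoint A B ∧ (∀ w : W, w ∈ A ∨ w ∈ B) ∧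
      ecut H A B ≤ δ * min (2 * ein H A + ecut H A B) (2 * ein H B + ecut H A B) := by
  have hA₀ : ({u} : Finset W) ≠ univ := by
    intro h
    have hv : v ∈ ({u} : Finset W) := h ▸ Finset.mem_univ v
    exact huv (Finset.mem_singleton.mp hv).symm
  unfold conduct at hc
  set 𝒮 := { x | ∃ A : Finset W, A.Nonempty ∧ A ≠ univ ∧
    x = ecut H A Aᶜ / min (gvol H A) (gvol H Aᶜ) } with h𝒮
  have hne𝒮 : 𝒮.Nonempty := ⟨_, ⟨{u}, Finset.singleton_nonempty u, hA₀, rfl⟩⟩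
  have hex : ∃ x ∈ 𝒮, x < δ := by
    by_contra hcon
    push_neg at hcon
    exact absurd hc (not_lt.mpr (le_csInf hne𝒮 hcon))
  obtain ⟨x, ⟨A, hAne, hAu, rfl⟩, hx⟩ := hex
  have hBne : (Aᶜ : Finset W).Nonempty := by
    refine Finset.nonempty_iff_ne_empty.mpr fun h => hAu ?_
    exact (Finset.compl_eq_empty_iff A).mp h
  refine ⟨A, Aᶜ, hAne, hBne, disjoint_compl_right,
    fun w => (em (w ∈ A)).imp id Finset.mem_compl.mpr, ?_⟩
  have hvA : gvol H A = 2 * ein H A + ecut H A Aᶜ := by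
    rw [gvol_eq, ecut_split_compl H A A]
    unfold ein; ring
  have hvB : gvol H Aᶜ = 2 * ein H Aᶜ + ecut H A Aᶜ := by
    rw [gvol_eq, ecut_split_compl H Aᶜ A, ecut_comm H Aᶜ A]
    have h2 : ecut H Aᶜ Aᶜ = 2 * ein H Aᶜ := by unfold ein; ring
    rw [h2]; ring
  rw [hvA, hvB] at hx
  have hcle : ecut H A Aᶜ
      ≤ min (2 * ein H A + ecut H A Aᶜ) (2 * ein H Aᶜ + ecut H A Aᶜ) := by
    apply le_min <;> nlinarith [ein_nonneg H A, ein_nonneg H Aᶜ]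
  by_cases hpos : 0 < min (2 * ein H A + ecut H A Aᶜ) (2 * ein H Aᶜ + ecut H A Aᶜ)
  · exact le_of_lt ((div_lt_iff₀ hpos).mp hx)
  · push_neg at hpos
    have h0 : ecut H A Aᶜ = 0 :=
      le_antisymm (le_trans hcle hpos) (ecut_nonneg _ _ _)
    rw [h0]
    apply mul_nonneg hδ0.le
    rw [h0] at hcle
    linarith

/-- Extract a sparse cut from non-expansion of the induced subgraph. -/
lemma exists_cut (G : SimpleGraph V) (δ : ℝ) (hδ0 : 0 < δ) (U : Finset V)
    (hU : 0 < ein G U) (hc : conduct (G.induce (U : Set V)) < δ) :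
    ∃ S T : Finset V, S.Nonempty ∧ T.Nonempty ∧ Disjoint S T ∧ S ∪ T = U ∧
      ecut G S T ≤ δ * min (2 * ein G S + ecut G S T) (2 * ein G T + ecut G S T) := by
  classical
  -- find two distinct vertices of U joined by an edge
  have hfil : (((U ×ˢ U).filter fun p => G.Adj p.1 p.2)).Nonempty := by
    by_contra hcon
    rw [Finset.not_nonempty_iff_eq_empty] at hcon
    unfold ein ecut at hU
    rw [hcon] at hU
    simp at hU
  obtain ⟨⟨u, v⟩, hp⟩ := hfil
  simp only [Finset.mem_filter, Finset.mem_product] at hp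
  obtain ⟨⟨hu, hv⟩, hadj⟩ := hp
  have huv : u ≠ v := G.ne_of_adj hadj
  have hu' : u ∈ (U : Set V) := by simpa using hu
  have hv' : v ∈ (U : Set V) := by simpa using hv
  have huv' : (⟨u, hu'⟩ : ((U : Set V) : Set V)) ≠ ⟨v, hv'⟩ :=
    fun h => huv (congrArg Subtype.val h)
  obtain ⟨A, B, hAne, hBne, hAB, hABu, hcut⟩ :=
    conduct_witness (G.induce (U : Set V)) hδ0 hc ⟨u, hu'⟩ ⟨v, hv'⟩ huv'
  refine ⟨A.image Subtype.val, B.image Subtype.val, hAne.image _, hBne.image _,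
    (Finset.disjoint_image Subtype.val_injective).mpr hAB, ?_, ?_⟩
  · ext x
    simp only [Finset.mem_union, Finset.mem_image]
    constructor
    · rintro (⟨a, _, rfl⟩ | ⟨b, _, rfl⟩)
      · simpa using a.2
      · simpa using b.2
    · intro hxU
      rcases hABu ⟨x, by simpa using hxU⟩ with h | h
      · exact Or.inl ⟨_, h, rfl⟩
      · exact Or.inr ⟨_, h, rfl⟩
  · have e1 : ecut (G.induce (U : Set V)) A B
        = ecut G (A.image Subtype.val) (B.image Subtype.val) := ecut_image G U A B
    have e2 : ein (G.induce (U : Set V)) A = ein G (A.image Subtype.val) := by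
      unfold ein; rw [ecut_image]
    have e3 : ein (G.induce (U : Set V)) B = ein G (B.image Subtype.val) := by
      unfold ein; rw [ecut_image]
    rw [e1, e2, e3] at hcut
    exact hcut

/-- Main recursive partitioning lemma. -/
lemma main_partition (G : SimpleGraph V) (e₀ δ : ℝ)
    (he₀ : 0 < e₀) (hδ0 : 0 < δ) (hδ1 : δ < 1)
    (hexp : ∀ U : Finset V, e₀ < ein G U → conduct (G.induce (U : Set V)) < δ)
    (A : Finset V) :
    ∃ Ps : Finset (Finset V),
      (∀ B ∈ Ps, B.Nonempty) ∧ (Ps : Set (Finset V)).PairwiseDisjoint id ∧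
      Ps.sup id = A ∧
      (∀ B ∈ Ps, ein G B ≤ max (edgecount G / 2) e₀) ∧
      ein G A - ∑ B ∈ Ps, ein G B ≤ phiB δ (max (edgecount G / 2) e₀) (ein G A) := by
  classical
  set M := max (edgecount G / 2) e₀ with hMdef
  have hM : 0 < M := lt_max_of_lt_right he₀
  induction A using Finset.strongInduction with
  | _ A ih =>
    by_cases hA : ein G A ≤ M
    · by_cases hAe : A = ∅
      · refine ⟨∅, by simp, by simp, by simp [hAe], by simp, ?_⟩
        have h0 : ein G ∅ = 0 := by unfold ein ecut; simp
        rw [hAe, h0]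
        simp [phiB, hM.le]
      · refine ⟨{A}, ?_, ?_, ?_, ?_, ?_⟩
        · intro B hB; rw [Finset.mem_singleton] at hB; subst hB
          exact Finset.nonempty_iff_ne_empty.mpr hAe
        · simp
        · simp
        · intro B hB; rw [Finset.mem_singleton] at hB; subst hB; exact hA
        · rw [Finset.sum_singleton]
          rw [phiB, if_pos hA]
          linarith
    · push_neg at hA
      have he₀A : e₀ < ein G A := lt_of_le_of_lt (le_max_right _ _) hA
      have hU0 : 0 < ein G A := lt_trans hM hA
      obtain ⟨S, T, hSne, hTne, hST, hSTU, hcut⟩ :=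
        exists_cut G δ hδ0 A hU0 (hexp A he₀A)
      have hSA : S ⊆ A := hSTU ▸ Finset.subset_union_left
      have hTA : T ⊆ A := hSTU ▸ Finset.subset_union_right
      have hSssub : S ⊂ A := by
        refine ⟨hSA, fun h => ?_⟩
        obtain ⟨t, ht⟩ := hTne
        exact (Finset.disjoint_left.mp hST (h (hTA ht)) ht)
      have hTssub : T ⊂ A := by
        refine ⟨hTA, fun h => ?_⟩
        obtain ⟨s, hs⟩ := hSne
        exact (Finset.disjoint_left.mp hST hs (h (hSA hs)))
      obtain ⟨PS, hPSne, hPSdisj, hPSsup, hPSbound, hPSdef⟩ := ih S hSssub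
      obtain ⟨PT, hPTne, hPTdisj, hPTsup, hPTbound, hPTdef⟩ := ih T hTssub
      have hsubS : ∀ B ∈ PS, B ⊆ S := fun B hB => hPSsup ▸ Finset.le_sup (f := id) hB
      have hsubT : ∀ B ∈ PT, B ⊆ T := fun B hB => hPTsup ▸ Finset.le_sup (f := id) hB
      have hPdis : Disjoint PS PT := by
        rw [Finset.disjoint_left]
        intro B hBS hBT
        obtain ⟨b, hb⟩ := hPSne B hBS
        exact Finset.disjoint_left.mp hST (hsubS B hBS hb) (hsubT B hBT hb)
      refine ⟨PS ∪ PT, ?_, ?_, ?_, ?_, ?_⟩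
      · intro B hB
        rcases Finset.mem_union.mp hB with h | h
        · exact hPSne B h
        · exact hPTne B h
      · intro B hB C hC hBC
        rw [Finset.coe_union, Set.mem_union] at hB hC
        rcases hB with hB | hB <;> rcases hC with hC | hC
        · exact hPSdisj hB hC hBC
        · exact (hST.mono (hsubS B hB) (hsubT C hC))
        · exact (hST.symm.mono (hsubT B hB) (hsubS C hC))
        · exact hPTdisj hB hC hBC
      · rw [Finset.sup_union, hPSsup, hPTsup]
        rw [← hSTU]
        rfl
      · intro B hB
        rcases Finset.mem_union.mp hB with h | h
        · exact hPSbound B h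
        · exact hPTbound B h
      · rw [Finset.sum_union hPdis]
        have heinA : ein G A = ein G S + ein G T + ecut G S T := by
          rw [← hSTU]; exact ein_union G hST
        have habc : ein G S + ein G T + ecut G S T ≤ 2 * M := by
          have h1 : ein G A ≤ ein G univ := ein_mono G (Finset.subset_univ A)
          have h2 : edgecount G ≤ 2 * M := by
            have := le_max_left (edgecount G / 2) e₀
            rw [hMdef]; linarith
          rw [← heinA]
          rw [edgecount_eq] at h2
          linarith
        have hstep := phi_step δ M (ein G S) (ein G T) (ecut G S T) hδ0 hδ1 hM
          (ein_nonneg G S) (ein_nonneg G T) (ecut_nonneg G S T)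
          habc (heinA ▸ hA) hcut
        rw [heinA]
        have := phiB_nonneg (δ := δ) (M := M) (m := ein G S) hδ0 hδ1 hM
        linarith [hPSdef, hPTdef, hstep,
          phiB_nonneg (δ := δ) (M := M) (m := ein G T) hδ0 hδ1 hM]

/-- If every vertex set `U` with `e_G(U) > e₀` induces a subgraph that is not a
`δ`-expander, then there is a vertex partition `𝒜` with all parts having at most
`max{e(G)/2, e₀}` internal edges and with at most `(δ/(1+δ))·((3+δ)/2)·e(G)` edges between
distinct parts. -/
theorem stmt7 {V : Type*} [Fintype V] (G : SimpleGraph V) (e₀ δ : ℝ)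
    (he₀ : 0 < e₀) (hδ0 : 0 < δ) (hδ1 : δ < 1)
    (hexp : ∀ U : Finset V, e₀ < ein G U → conduct (G.induce (U : Set V)) < δ) :
    ∃ P : Finpartition (univ : Finset V),
      (∀ A ∈ P.parts, ein G A ≤ max (edgecount G / 2) e₀) ∧
      edgecount G - ∑ A ∈ P.parts, ein G A ≤ δ / (1 + δ) * ((3 + δ) / 2) * edgecount G := by
  classical
  obtain ⟨Ps, hne, hdisj, hsup, hbound, hdef⟩ :=
    main_partition G e₀ δ he₀ hδ0 hδ1 hexp univ
  set M := max (edgecount G / 2) e₀ with hMdef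
  have hM : 0 < M := lt_max_of_lt_right he₀
  refine ⟨⟨Ps, Finset.supIndep_iff_pairwiseDisjoint.mpr hdisj, hsup, ?_⟩, hbound, ?_⟩
  · intro h
    obtain ⟨b, hb⟩ := hne ⊥ h
    exact absurd hb (Finset.notMem_empty b)
  · have he : 0 ≤ edgecount G := by unfold edgecount; positivity
    have hMe : edgecount G / 2 ≤ M := le_max_left _ _
    have hfin := phi_final δ M (edgecount G) hδ0 hδ1 hM he hMe
    have h1 : ein G univ = edgecount G := (edgecount_eq G).symm
    rw [h1] at hdef
    exact le_trans hdef hfin
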